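/- Let R be a commutative ring, equip the free algebra R⟨X₁,…,Xₙ⟩ with a weight ℕ-gradation determined by positive integer degrees deg Xᵢ = nᵢ, and let ≺ be an ℕ-graded monomial ordering on the standard monomial basis B. Let I be an ideal of R⟨X₁,…,Xₙ⟩ admitting a monic Gröbner basis G with respect to ≺, and let J = ⟨LH(I)⟩. Then the following two-sided ideals of R⟨X₁,…,Xₙ⟩ coincide: the ideal generated by {LC(f)·LM(f) : f ∈ J, f ≠ 0}, the ideal generated by {LC(f)·LM(f) : f ∈ I, f ≠ 0}, the ideal generated by LM(G), the ideal generated by LM(I), and the ideal generated by LM(J). -/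

import Mathlib

noncomputable section
open MonoidAlgebra
open scoped Classical

/-- Words in the alphabet `X_1, ..., X_n`: the standard monomial basis `B`. -/
abbrev Word (n : ℕ) : Type := FreeMonoid (Fin n)

/-- The free `R`-algebra `R⟨X_1, ..., X_n⟩`, realized as the monoid algebra of the
free monoid on `n` letters over `R`. -/
abbrev FreeAlg (R : Type) [CommRing R] (n : ℕ) : Type := MonoidAlgebra R (Word n)

variable {R : Type} [CommRing R] {n : ℕ}

/-- The monomial (word) `w` viewed as an element of the free algebra. -/
def mono (R : Type) [CommRing R] {n : ℕ} (w : Word n) : FreeAlg R n :=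
  MonoidAlgebra.of R (Word n) w

/-- A monomial ordering: a well-ordering on words compatible with two-sided multiplication. -/
def IsMonomialOrder (n : ℕ) [LinearOrder (Word n)] : Prop :=
  WellFoundedLT (Word n) ∧ ∀ w u v s : Word n, u < v → w * u * s < w * v * s

/-- The leading monomial of `f` (with junk value `1` for `f = 0`). -/
def LMon [LinearOrder (Word n)] (f : FreeAlg R n) : Word n :=
  if h : f = 0 then 1 else f.coeff.support.max'
    (Finsupp.support_nonempty_iff.mpr (fun h' => h (MonoidAlgebra.coeff_eq_zero.mp h')))

/-- The leading coefficient of `f`. -/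
def LCoef [LinearOrder (Word n)] (f : FreeAlg R n) : R := f.coeff (LMon f)

/-- `f` is monic: it is nonzero and its leading coefficient is `1`. -/
def IsMonic [LinearOrder (Word n)] (f : FreeAlg R n) : Prop := f ≠ 0 ∧ LCoef f = 1

/-- `v` divides `u` as words: `u = w * v * s` for some words `w, s`. -/
def MDvd {n : ℕ} (v u : Word n) : Prop := ∃ w s : Word n, u = w * v * s

/-- `G` is a monic Gröbner basis of the two-sided ideal `I`: every element of `G` is monic,
and the leading monomial of every nonzero element of `I` is divisible by the leading
monomial of some element of `G`. -/
def IsMonicGB [LinearOrder (Word n)] (G : Set (FreeAlg R n))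
    (I : TwoSidedIdeal (FreeAlg R n)) : Prop :=
  (∀ g ∈ G, IsMonic g) ∧ ∀ f ∈ I, f ≠ 0 → ∃ g ∈ G, MDvd (LMon g) (LMon f)

/-- The weight degree of a word, for the weights `deg Xᵢ = d i`. -/
def wdeg {n : ℕ} (d : Fin n → ℕ) (w : Word n) : ℕ := ((FreeMonoid.toList w).map d).sum

/-- The maximal weight degree occurring in `f`. -/
def maxdeg (d : Fin n → ℕ) (f : FreeAlg R n) : ℕ := f.coeff.support.sup (wdeg d)

/-- The ℕ-leading homogeneous element `LH(f)` of `f`: the sum of the terms of `f` of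
maximal weight degree. -/
def LH (d : Fin n → ℕ) (f : FreeAlg R n) : FreeAlg R n :=
  ∑ w ∈ f.coeff.support.filter (fun w => wdeg d w = maxdeg d f), MonoidAlgebra.single w (f.coeff w)

/-- The set `LH(S)` of leading homogeneous elements of the nonzero elements of `S`. -/
def LHset (d : Fin n → ℕ) (S : Set (FreeAlg R n)) : Set (FreeAlg R n) :=
  {x | ∃ f ∈ S, f ≠ 0 ∧ x = LH d f}

/-- An ℕ-graded monomial ordering with respect to the weights `d`: a monomial ordering
such that words of smaller degree are smaller. -/
def IsGradedMonomialOrder {n : ℕ} (d : Fin n → ℕ) [LinearOrder (Word n)] : Prop :=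
  IsMonomialOrder n ∧ ∀ u v : Word n, wdeg d u < wdeg d v → u < v

/-- The leading term `LC(f)·LM(f)` of `f`, as an element of the free algebra. -/
def LTerm [LinearOrder (Word n)] (f : FreeAlg R n) : FreeAlg R n :=
  MonoidAlgebra.single (LMon f) (LCoef f)

/-- The set of leading terms `LC(f)·LM(f)` of the nonzero elements of `S`. -/
def LTset [LinearOrder (Word n)] (S : Set (FreeAlg R n)) : Set (FreeAlg R n) :=
  {x | ∃ f ∈ S, f ≠ 0 ∧ x = LTerm f}

/-- The set `LM(S)` of leading monomials of the nonzero elements of `S`. -/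
def LMset [LinearOrder (Word n)] (S : Set (FreeAlg R n)) : Set (Word n) :=
  {w | ∃ f ∈ S, f ≠ 0 ∧ LMon f = w}

/-! ### Auxiliary machinery -/

section Aux

variable (d : Fin n → ℕ)

/-- The degree-`m` homogeneous component of `f`. -/
def wcomp (m : ℕ) (f : FreeAlg R n) : FreeAlg R n :=
  ∑ w ∈ f.coeff.support.filter (fun w => wdeg d w = m), MonoidAlgebra.single w (f.coeff w)

lemma FreeAlg.induction_linear {p : FreeAlg R n → Prop} (f : FreeAlg R n) (h0 : p 0)
    (hadd : ∀ f g : FreeAlg R n, p f → p g → p (f + g))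
    (hsingle : ∀ (a : Word n) (b : R), p (MonoidAlgebra.single a b)) : p f :=
  MonoidAlgebra.induction_linear f h0 hadd hsingle

lemma LH_eq_wcomp (f : FreeAlg R n) : LH d f = wcomp d (maxdeg d f) f := rfl

lemma wcomp_apply (m : ℕ) (f : FreeAlg R n) (u : Word n) :
    (wcomp d m f).coeff u = if wdeg d u = m then f.coeff u else 0 := by
  classical
  rw [wcomp, MonoidAlgebra.coeff_sum, Finsupp.finset_sum_apply]
  simp only [MonoidAlgebra.coeff_single, Finsupp.single_apply]
  rw [Finset.sum_ite_eq' ]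
  by_cases h1 : wdeg d u = m <;> by_cases h2 : f.coeff u = 0 <;>
    simp [Finset.mem_filter, Finsupp.mem_support_iff, h1, h2]

lemma wcomp_zero (m : ℕ) : wcomp d m (0 : FreeAlg R n) = 0 := by
  simp [wcomp]

lemma wcomp_add (m : ℕ) (f g : FreeAlg R n) :
    wcomp d m (f + g) = wcomp d m f + wcomp d m g := by
  ext u
  rw [wcomp_apply, show (wcomp d m f + wcomp d m g).coeff u = (wcomp d m f).coeff u + (wcomp d m g).coeff u from rfl,
    wcomp_apply, wcomp_apply]
  split_ifs <;> first | rfl | simp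

lemma wcomp_neg (m : ℕ) (f : FreeAlg R n) :
    wcomp d m (-f) = -wcomp d m f := by
  ext u
  rw [wcomp_apply, show (-wcomp d m f).coeff u = -((wcomp d m f).coeff u) from rfl, wcomp_apply]
  split_ifs <;> first | rfl | simp

lemma wcomp_single (m : ℕ) (w : Word n) (b : R) :
    wcomp d m (MonoidAlgebra.single w b : FreeAlg R n) =
      if wdeg d w = m then MonoidAlgebra.single w b else 0 := by
  ext u
  rw [wcomp_apply, apply_ite (fun g : FreeAlg R n => g.coeff u)]
  rcases eq_or_ne u w with rfl | hne
  · split_ifs <;> rfl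
  · split_ifs <;> simp [MonoidAlgebra.coeff_single, Finsupp.single_apply, Ne.symm hne]

lemma maxdeg_le_iff {f : FreeAlg R n} {m : ℕ} :
    maxdeg d f ≤ m ↔ ∀ w, f.coeff w ≠ 0 → wdeg d w ≤ m := by
  simp [maxdeg, Finset.sup_le_iff, Finsupp.mem_support_iff]

lemma maxdeg_zero : maxdeg d (0 : FreeAlg R n) = 0 := by
  simp [maxdeg]

lemma wcomp_eq_zero_of_lt {f : FreeAlg R n} {m : ℕ} (h : maxdeg d f < m) :
    wcomp d m f = 0 := by
  ext u
  rw [wcomp_apply]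
  split_ifs with h1
  · by_contra hfu
    have : wdeg d u ≤ maxdeg d f := Finset.le_sup (Finsupp.mem_support_iff.mpr hfu)
    omega
  · rfl

lemma maxdeg_le_of_wcomp {f : FreeAlg R n} {m : ℕ}
    (h : ∀ k, m < k → wcomp d k f = 0) : maxdeg d f ≤ m := by
  rw [maxdeg_le_iff]
  intro w hw
  by_contra hlt
  push_neg at hlt
  have h0 := congrArg (fun g : FreeAlg R n => g.coeff w) (h (wdeg d w) hlt)
  simp only [wcomp_apply, if_pos rfl, MonoidAlgebra.coeff_zero, Finsupp.coe_zero, Pi.zero_apply] at h0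
  exact hw h0

lemma wdeg_mul (u v : Word n) : wdeg d (u * v) = wdeg d u + wdeg d v := by
  simp [wdeg, FreeMonoid.toList_mul]

lemma wcomp_single_mul (m : ℕ) (u : Word n) (c : R) (h : FreeAlg R n) :
    wcomp d m (MonoidAlgebra.single u c * h) =
      if wdeg d u ≤ m then MonoidAlgebra.single u c * wcomp d (m - wdeg d u) h else 0 := by
  induction h using FreeAlg.induction_linear with
  | h0 => rw [mul_zero, wcomp_zero, wcomp_zero, mul_zero]; simp
  | hadd f g hf hg =>
      rw [mul_add, wcomp_add, hf, hg, wcomp_add]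
      split_ifs <;> simp [mul_add]
  | hsingle w b =>
      rw [show (MonoidAlgebra.single u c * MonoidAlgebra.single w b : FreeAlg R n)
            = MonoidAlgebra.single (u * w) (c * b) from MonoidAlgebra.single_mul_single ..,
        wcomp_single, wcomp_single, wdeg_mul]
      by_cases h2 : wdeg d u ≤ m
      · by_cases h3 : wdeg d w = m - wdeg d u
        · rw [if_pos (by omega), if_pos h2, if_pos h3,
            show (MonoidAlgebra.single u c * MonoidAlgebra.single w b : FreeAlg R n)
              = MonoidAlgebra.single (u * w) (c * b) from MonoidAlgebra.single_mul_single ..]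
        · rw [if_neg (by omega), if_pos h2, if_neg h3, mul_zero]
      · rw [if_neg (by omega), if_neg h2]

lemma wcomp_mul_single (m : ℕ) (u : Word n) (c : R) (h : FreeAlg R n) :
    wcomp d m (h * MonoidAlgebra.single u c) =
      if wdeg d u ≤ m then wcomp d (m - wdeg d u) h * MonoidAlgebra.single u c else 0 := by
  induction h using FreeAlg.induction_linear with
  | h0 => rw [zero_mul, wcomp_zero, wcomp_zero, zero_mul]; simp
  | hadd f g hf hg =>
      rw [add_mul, wcomp_add, hf, hg, wcomp_add]
      split_ifs <;> simp [add_mul]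
  | hsingle w b =>
      rw [show (MonoidAlgebra.single w b * MonoidAlgebra.single u c : FreeAlg R n)
            = MonoidAlgebra.single (w * u) (b * c) from MonoidAlgebra.single_mul_single ..,
        wcomp_single, wcomp_single, wdeg_mul]
      by_cases h2 : wdeg d u ≤ m
      · by_cases h3 : wdeg d w = m - wdeg d u
        · rw [if_pos (by omega), if_pos h2, if_pos h3,
            show (MonoidAlgebra.single w b * MonoidAlgebra.single u c : FreeAlg R n)
              = MonoidAlgebra.single (w * u) (b * c) from MonoidAlgebra.single_mul_single ..]
        · rw [if_neg (by omega), if_pos h2, if_neg h3, zero_mul]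
      · rw [if_neg (by omega), if_neg h2]

lemma wcomp_wcomp_self (m : ℕ) (f : FreeAlg R n) :
    wcomp d m (wcomp d m f) = wcomp d m f := by
  ext u
  simp only [wcomp_apply]
  split_ifs <;> rfl

lemma wcomp_wcomp_ne {k m : ℕ} (hkm : k ≠ m) (f : FreeAlg R n) :
    wcomp d m (wcomp d k f) = 0 := by
  ext u
  simp only [wcomp_apply, MonoidAlgebra.coeff_zero, Finsupp.coe_zero, Pi.zero_apply]
  split_ifs <;> simp_all

lemma maxdeg_wcomp_le (m : ℕ) (f : FreeAlg R n) : maxdeg d (wcomp d m f) ≤ m :=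
  maxdeg_le_of_wcomp d fun k hk => wcomp_wcomp_ne d (by omega) f

/-- `h` is approximated in every degree by elements of `I` of bounded degree. -/
def Approx (I : TwoSidedIdeal (FreeAlg R n)) (h : FreeAlg R n) : Prop :=
  ∀ m : ℕ, ∃ f, f ∈ I ∧ maxdeg d f ≤ m ∧ wcomp d m h = wcomp d m f

variable {I : TwoSidedIdeal (FreeAlg R n)}

lemma approx_zero : Approx d I (0 : FreeAlg R n) :=
  fun m => ⟨0, I.zero_mem, by simp [maxdeg_zero], rfl⟩

lemma approx_add {h₁ h₂ : FreeAlg R n} (p1 : Approx d I h₁) (p2 : Approx d I h₂) :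
    Approx d I (h₁ + h₂) := by
  intro m
  obtain ⟨f₁, hf₁, hd₁, hc₁⟩ := p1 m
  obtain ⟨f₂, hf₂, hd₂, hc₂⟩ := p2 m
  refine ⟨f₁ + f₂, I.add_mem hf₁ hf₂, ?_, by rw [wcomp_add, wcomp_add, hc₁, hc₂]⟩
  apply maxdeg_le_of_wcomp
  intro k hk
  rw [wcomp_add, wcomp_eq_zero_of_lt d (by omega), wcomp_eq_zero_of_lt d (by omega), add_zero]

lemma approx_neg {h : FreeAlg R n} (p : Approx d I h) : Approx d I (-h) := by
  intro m
  obtain ⟨f, hf, hd1, hc⟩ := p m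
  refine ⟨-f, I.neg_mem hf, ?_, by rw [wcomp_neg, wcomp_neg, hc]⟩
  apply maxdeg_le_of_wcomp
  intro k hk
  rw [wcomp_neg, wcomp_eq_zero_of_lt d (by omega), neg_zero]

lemma approx_single_mul {h : FreeAlg R n} (u : Word n) (c : R) (p : Approx d I h) :
    Approx d I (MonoidAlgebra.single u c * h) := by
  intro m
  by_cases hu : wdeg d u ≤ m
  · obtain ⟨f, hfI, hfd, hfc⟩ := p (m - wdeg d u)
    refine ⟨MonoidAlgebra.single u c * f, I.mul_mem_left _ _ hfI, ?_, ?_⟩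
    · apply maxdeg_le_of_wcomp
      intro k hk
      rw [wcomp_single_mul]
      split_ifs with h2
      · rw [wcomp_eq_zero_of_lt d (by omega), mul_zero]
      · rfl
    · rw [wcomp_single_mul, wcomp_single_mul, if_pos hu, if_pos hu, hfc]
  · exact ⟨0, I.zero_mem, by simp [maxdeg_zero],
      by rw [wcomp_single_mul, if_neg hu, wcomp_zero]⟩

lemma approx_mul_single {h : FreeAlg R n} (u : Word n) (c : R) (p : Approx d I h) :
    Approx d I (h * MonoidAlgebra.single u c) := by
  intro m
  by_cases hu : wdeg d u ≤ m
  · obtain ⟨f, hfI, hfd, hfc⟩ := p (m - wdeg d u)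
    refine ⟨f * MonoidAlgebra.single u c, I.mul_mem_right _ _ hfI, ?_, ?_⟩
    · apply maxdeg_le_of_wcomp
      intro k hk
      rw [wcomp_mul_single]
      split_ifs with h2
      · rw [wcomp_eq_zero_of_lt d (by omega), zero_mul]
      · rfl
    · rw [wcomp_mul_single, wcomp_mul_single, if_pos hu, if_pos hu, hfc]
  · exact ⟨0, I.zero_mem, by simp [maxdeg_zero],
      by rw [wcomp_mul_single, if_neg hu, wcomp_zero]⟩

lemma approx_mul_left {h : FreeAlg R n} (x : FreeAlg R n) (p : Approx d I h) :
    Approx d I (x * h) := by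
  induction x using FreeAlg.induction_linear with
  | h0 => rw [zero_mul]; exact approx_zero d
  | hadd f g hf hg => rw [add_mul]; exact approx_add d hf hg
  | hsingle u c => exact approx_single_mul d u c p

lemma approx_mul_right {h : FreeAlg R n} (x : FreeAlg R n) (p : Approx d I h) :
    Approx d I (h * x) := by
  induction x using FreeAlg.induction_linear with
  | h0 => rw [mul_zero]; exact approx_zero d
  | hadd f g hf hg => rw [mul_add]; exact approx_add d hf hg
  | hsingle u c => exact approx_mul_single d u c p

lemma approx_LH {f : FreeAlg R n} (hf : f ∈ I) : Approx d I (LH d f) := by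
  intro m
  rcases eq_or_ne m (maxdeg d f) with rfl | hne
  · exact ⟨f, hf, le_rfl, by rw [LH_eq_wcomp, wcomp_wcomp_self]⟩
  · exact ⟨0, I.zero_mem, by simp [maxdeg_zero],
      by rw [LH_eq_wcomp, wcomp_wcomp_ne d (Ne.symm hne), wcomp_zero]⟩

lemma approx_of_mem_span {h : FreeAlg R n}
    (hh : h ∈ TwoSidedIdeal.span (LHset d (I : Set (FreeAlg R n)))) :
    Approx d I h := by
  classical
  let K : TwoSidedIdeal (FreeAlg R n) :=
    TwoSidedIdeal.mk' {h | Approx d I h} (approx_zero d)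
      (fun p1 p2 => approx_add d p1 p2)
      (fun p => approx_neg d p)
      (fun {x y} p => approx_mul_left d x p)
      (fun {x y} p => approx_mul_right d y p)
  have hsub : LHset d (I : Set (FreeAlg R n)) ⊆ (K : Set (FreeAlg R n)) := by
    rintro x ⟨f, hfI, hf0, rfl⟩
    show LH d f ∈ K
    rw [TwoSidedIdeal.mem_mk']
    exact approx_LH d hfI
  have := TwoSidedIdeal.mem_span_iff.mp hh K hsub
  rwa [TwoSidedIdeal.mem_mk'] at this

end Aux

section Order

variable [LinearOrder (Word n)] (d : Fin n → ℕ)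

lemma LMon_mem {f : FreeAlg R n} (hf : f ≠ 0) : LMon f ∈ f.coeff.support := by
  rw [LMon, dif_neg hf]; exact Finset.max'_mem _ _

lemma le_LMon {f : FreeAlg R n} (hf : f ≠ 0) {w : Word n} (hw : w ∈ f.coeff.support) :
    w ≤ LMon f := by
  rw [LMon, dif_neg hf]; exact Finset.le_max' _ _ hw

lemma wdeg_LMon (hord : IsGradedMonomialOrder d) {f : FreeAlg R n} (hf : f ≠ 0) :
    wdeg d (LMon f) = maxdeg d f := by
  apply le_antisymm
  · exact Finset.le_sup (LMon_mem hf)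
  · apply Finset.sup_le
    intro w hw
    by_contra hlt
    push_neg at hlt
    exact absurd (hord.2 _ _ hlt) (not_lt.mpr (le_LMon hf hw))

/-- The key transfer lemma: if `f` agrees with `h` in `h`'s top degree and has degree at
most that of `h`, then `f` has the same leading monomial and coefficient as `h`. -/
lemma transfer (hord : IsGradedMonomialOrder d) {h f : FreeAlg R n} (hh : h ≠ 0)
    (hm : maxdeg d f ≤ maxdeg d h)
    (hc : wcomp d (maxdeg d h) h = wcomp d (maxdeg d h) f) :
    f ≠ 0 ∧ LMon f = LMon h ∧ LCoef f = LCoef h := by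
  have hwl : wdeg d (LMon h) = maxdeg d h := wdeg_LMon d hord hh
  have hfl : f.coeff (LMon h) = h.coeff (LMon h) := by
    have h1 := congrArg (fun g : FreeAlg R n => g.coeff (LMon h)) hc
    simpa [wcomp_apply, hwl] using h1.symm
  have hh0 : h.coeff (LMon h) ≠ 0 := Finsupp.mem_support_iff.mp (LMon_mem hh)
  have hf0 : f ≠ 0 := by
    rintro rfl
    rw [MonoidAlgebra.coeff_zero, Finsupp.coe_zero, Pi.zero_apply] at hfl
    exact hh0 hfl.symm
  have hmem : LMon h ∈ f.coeff.support := Finsupp.mem_support_iff.mpr (by rw [hfl]; exact hh0)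
  have hub : ∀ w ∈ f.coeff.support, w ≤ LMon h := by
    intro w hw
    have hwle : wdeg d w ≤ maxdeg d h := le_trans (Finset.le_sup hw) hm
    rcases lt_or_eq_of_le hwle with hlt | heq
    · exact le_of_lt (hord.2 _ _ (by rw [hwl]; exact hlt))
    · have hfw : f.coeff w = h.coeff w := by
        have h1 := congrArg (fun g : FreeAlg R n => g.coeff w) hc
        simpa [wcomp_apply, heq] using h1.symm
      exact le_LMon hh (Finsupp.mem_support_iff.mpr
        (by rw [← hfw]; exact Finsupp.mem_support_iff.mp hw))
  have hlm : LMon f = LMon h :=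
    le_antisymm (hub _ (LMon_mem hf0)) (le_LMon hf0 hmem)
  exact ⟨hf0, hlm, by rw [LCoef, LCoef, hlm, hfl]⟩

/-- For nonzero `h` in `J = span (LH I)` there is a nonzero `f ∈ I` with the same
leading monomial and coefficient. -/
lemma exists_same_LT (hord : IsGradedMonomialOrder d) {I : TwoSidedIdeal (FreeAlg R n)}
    {h : FreeAlg R n} (hh : h ∈ TwoSidedIdeal.span (LHset d (I : Set (FreeAlg R n))))
    (hh0 : h ≠ 0) :
    ∃ f ∈ I, f ≠ 0 ∧ LMon f = LMon h ∧ LCoef f = LCoef h := by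
  obtain ⟨f, hfI, hfd, hfc⟩ := approx_of_mem_span d hh (maxdeg d h)
  obtain ⟨h1, h2, h3⟩ := transfer d hord hh0 hfd hfc
  exact ⟨f, hfI, h1, h2, h3⟩

lemma LH_same_LT (hord : IsGradedMonomialOrder d) {f : FreeAlg R n} (hf : f ≠ 0) :
    LH d f ≠ 0 ∧ LMon (LH d f) = LMon f ∧ LCoef (LH d f) = LCoef f := by
  apply transfer d hord hf
  · rw [LH_eq_wcomp]; exact maxdeg_wcomp_le d _ f
  · rw [LH_eq_wcomp, wcomp_wcomp_self]

lemma LTset_span_LH (hord : IsGradedMonomialOrder d) (I : TwoSidedIdeal (FreeAlg R n)) :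
    LTset ((TwoSidedIdeal.span (LHset d (I : Set (FreeAlg R n))) :
        TwoSidedIdeal (FreeAlg R n)) : Set (FreeAlg R n)) = LTset (I : Set (FreeAlg R n)) := by
  ext x
  constructor
  · rintro ⟨h, hhJ, hh0, rfl⟩
    obtain ⟨f, hfI, hf0, hlm, hlc⟩ := exists_same_LT d hord hhJ hh0
    exact ⟨f, hfI, hf0, by rw [LTerm, LTerm, hlm, hlc]⟩
  · rintro ⟨f, hfI, hf0, rfl⟩
    obtain ⟨h1, h2, h3⟩ := LH_same_LT d hord hf0
    exact ⟨LH d f, TwoSidedIdeal.subset_span ⟨f, hfI, hf0, rfl⟩, h1,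
      by rw [LTerm, LTerm, h2, h3]⟩

lemma LMset_span_LH (hord : IsGradedMonomialOrder d) (I : TwoSidedIdeal (FreeAlg R n)) :
    LMset ((TwoSidedIdeal.span (LHset d (I : Set (FreeAlg R n))) :
        TwoSidedIdeal (FreeAlg R n)) : Set (FreeAlg R n)) = LMset (I : Set (FreeAlg R n)) := by
  ext w
  constructor
  · rintro ⟨h, hhJ, hh0, rfl⟩
    obtain ⟨f, hfI, hf0, hlm, _⟩ := exists_same_LT d hord hhJ hh0
    exact ⟨f, hfI, hf0, hlm⟩
  · rintro ⟨f, hfI, hf0, rfl⟩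
    obtain ⟨h1, h2, _⟩ := LH_same_LT d hord hf0
    exact ⟨LH d f, TwoSidedIdeal.subset_span ⟨f, hfI, hf0, rfl⟩, h1, h2⟩

lemma mono_eq_single (w : Word n) : mono R w = MonoidAlgebra.single w (1 : R) := rfl

lemma single_factor (w v s : Word n) (c : R) :
    (MonoidAlgebra.single (w * v * s) c : FreeAlg R n) =
      MonoidAlgebra.single w c * mono R v * MonoidAlgebra.single s (1 : R) := by
  rw [mono_eq_single,
    show (MonoidAlgebra.single w c * MonoidAlgebra.single v (1:R) : FreeAlg R n)
      = MonoidAlgebra.single (w * v) (c * 1) from MonoidAlgebra.single_mul_single ..,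
    show (MonoidAlgebra.single (w*v) (c*1) * MonoidAlgebra.single s (1:R) : FreeAlg R n)
      = MonoidAlgebra.single (w * v * s) (c * 1 * 1) from MonoidAlgebra.single_mul_single ..,
    mul_one, mul_one]

lemma LTerm_factor {f : FreeAlg R n} {w v s : Word n} (h : LMon f = w * v * s) :
    LTerm f = MonoidAlgebra.single w (LCoef f) * mono R v * MonoidAlgebra.single s (1 : R) := by
  rw [LTerm, h]
  exact single_factor w v s (LCoef f)

lemma mono_factor {u w v s : Word n} (h : u = w * v * s) :
    mono R u = MonoidAlgebra.single w (1 : R) * mono R v * MonoidAlgebra.single s (1 : R) := by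
  rw [mono_eq_single, h]
  exact single_factor w v s (1 : R)

end Order

/-- If `I` admits a monic Gröbner basis `G` with respect to an ℕ-graded
monomial ordering and `J = ⟨LH(I)⟩`, then the ideals generated by the leading terms of
`J`, the leading terms of `I`, `LM(G)`, `LM(I)` and `LM(J)` all coincide. -/
theorem five_leading_ideals_eq [LinearOrder (Word n)] (d : Fin n → ℕ) (hd : ∀ i, 0 < d i)
    (hord : IsGradedMonomialOrder d) (I : TwoSidedIdeal (FreeAlg R n))
    (G : Set (FreeAlg R n)) (hGI : ∀ g ∈ G, g ∈ I)
    (hGB : IsMonicGB G I) :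
    TwoSidedIdeal.span (LTset ((TwoSidedIdeal.span (LHset d (I : Set (FreeAlg R n))) :
        TwoSidedIdeal (FreeAlg R n)) : Set (FreeAlg R n))) =
      TwoSidedIdeal.span (LTset (I : Set (FreeAlg R n))) ∧
    TwoSidedIdeal.span (LTset (I : Set (FreeAlg R n))) =
      TwoSidedIdeal.span (mono R '' LMset G) ∧
    TwoSidedIdeal.span (mono R '' LMset G) =
      TwoSidedIdeal.span (mono R '' LMset (I : Set (FreeAlg R n))) ∧
    TwoSidedIdeal.span (mono R '' LMset (I : Set (FreeAlg R n))) =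
      TwoSidedIdeal.span (mono R ''
        LMset ((TwoSidedIdeal.span (LHset d (I : Set (FreeAlg R n))) :
          TwoSidedIdeal (FreeAlg R n)) : Set (FreeAlg R n))) := by
  have hLT := LTset_span_LH d hord I
  have hLM := LMset_span_LH d hord I
  have hmonoG : ∀ g ∈ G, mono R (LMon g) = LTerm g := by
    intro g hg
    rw [LTerm, (hGB.1 g hg).2, mono_eq_single]
  -- `LTset I ⊆ span (mono '' LMset G)`
  have sub1 : LTset (I : Set (FreeAlg R n)) ⊆
      (TwoSidedIdeal.span (mono R '' LMset G) : Set (FreeAlg R n)) := by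
    rintro x ⟨f, hfI, hf0, rfl⟩
    obtain ⟨g, hgG, w, s, hws⟩ := hGB.2 f hfI hf0
    have hmem : mono R (LMon g) ∈ TwoSidedIdeal.span (mono R '' LMset G) :=
      TwoSidedIdeal.subset_span ⟨LMon g, ⟨g, hgG, (hGB.1 g hgG).1, rfl⟩, rfl⟩
    show LTerm f ∈ TwoSidedIdeal.span (mono R '' LMset G)
    rw [LTerm_factor hws]
    exact TwoSidedIdeal.mul_mem_right _ _ _
      (TwoSidedIdeal.mul_mem_left _ _ _ hmem)
  -- `mono '' LMset G ⊆ LTset I`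
  have sub2 : mono R '' LMset G ⊆ LTset (I : Set (FreeAlg R n)) := by
    rintro x ⟨v, ⟨g, hgG, hg0, rfl⟩, rfl⟩
    exact ⟨g, hGI g hgG, hg0, hmonoG g hgG⟩
  -- `mono '' LMset I ⊆ span (mono '' LMset G)`
  have sub3 : mono R '' LMset (I : Set (FreeAlg R n)) ⊆
      (TwoSidedIdeal.span (mono R '' LMset G) : Set (FreeAlg R n)) := by
    rintro x ⟨v, ⟨f, hfI, hf0, rfl⟩, rfl⟩
    obtain ⟨g, hgG, w, s, hws⟩ := hGB.2 f hfI hf0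
    have hmem : mono R (LMon g) ∈ TwoSidedIdeal.span (mono R '' LMset G) :=
      TwoSidedIdeal.subset_span ⟨LMon g, ⟨g, hgG, (hGB.1 g hgG).1, rfl⟩, rfl⟩
    show mono R (LMon f) ∈ TwoSidedIdeal.span (mono R '' LMset G)
    rw [mono_factor hws]
    exact TwoSidedIdeal.mul_mem_right _ _ _
      (TwoSidedIdeal.mul_mem_left _ _ _ hmem)
  -- `mono '' LMset G ⊆ mono '' LMset I`
  have sub4 : mono R '' LMset G ⊆ mono R '' LMset (I : Set (FreeAlg R n)) := by
    rintro x ⟨v, ⟨g, hgG, hg0, rfl⟩, rfl⟩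
    exact ⟨LMon g, ⟨g, hGI g hgG, hg0, rfl⟩, rfl⟩
  have e2 : TwoSidedIdeal.span (LTset (I : Set (FreeAlg R n))) =
      TwoSidedIdeal.span (mono R '' LMset G) := by
    apply le_antisymm
    · intro x hx
      exact TwoSidedIdeal.mem_span_iff.mp hx _ sub1
    · intro x hx
      exact TwoSidedIdeal.mem_span_iff.mp hx _
        (sub2.trans TwoSidedIdeal.subset_span)
  have e3 : TwoSidedIdeal.span (mono R '' LMset G) =
      TwoSidedIdeal.span (mono R '' LMset (I : Set (FreeAlg R n))) := by
    apply le_antisymm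
    · intro x hx
      exact TwoSidedIdeal.mem_span_iff.mp hx _
        (sub4.trans TwoSidedIdeal.subset_span)
    · intro x hx
      exact TwoSidedIdeal.mem_span_iff.mp hx _ sub3
  exact ⟨by rw [hLT], e2, e3, by rw [hLM]⟩
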